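/- Deviation bound between discrete and continuous second-order schemes under arbitrary bounded rounding (Theorem 3). Assume the heterogeneous diffusion-matrix assumptions and the graph support condition for a simple graph G with maximum degree at most d, and let β = 2/(1+√(1−λ²)). Let Q(t) be defined by the SOS recursion of matrices. Let e : ℕ → Matrix (Fin n) (Fin n) ℝ be any family of rounding-error matrices with (e s) i j = −(e s) j i, |(e s) i j| ≤ 1 for all s, i, j, and (e s) i j = 0 whenever {i,j} is not an edge of G. Then for every node k and every round t: |Σ_{s=0}^{t} (1/2)·Σ_{i,j adjacent in G} (Q(s) k i − Q(s) k j)·(e (t−s)) i j| ≤ 16 · d · √(2 · n · smax) / (1 − λ). (By the deviation identity for linear processes, the left-hand side equals the deviation |xD(k, t+1) − xSOS(k, t+1)| between the discrete SOS with these rounding errors and the continuous SOS, so the discrete second-order scheme deviates from its continuous counterpart by at most O(d·√(n·smax)/(1−λ)).) -/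

import Mathlib

/-- SOS recursion of matrices: `Q(0) = I`, `Q(1) = β·M`,
`Q(t+2) = β·M·Q(t+1) + (1−β)·Q(t)`. -/
def sosQ {n : ℕ} (M : Matrix (Fin n) (Fin n) ℝ) (β : ℝ) :
    ℕ → Matrix (Fin n) (Fin n) ℝ
  | 0 => 1
  | 1 => β • M
  | (t + 2) => β • (M * sosQ M β (t + 1)) + (1 - β) • sosQ M β t

open Finset

lemma sos_sum_geo (r : ℝ) (hr0 : 0 ≤ r) (hr1 : r < 1) (T : ℕ) :
    ∑ u ∈ Finset.range T, ((u : ℝ) + 1) * r ^ u ≤ 1 / (1 - r) ^ 2 := by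
  have h1 : 0 < 1 - r := by linarith
  have key : ∀ T : ℕ, (1 - r)^2 * ∑ u ∈ Finset.range T, ((u : ℝ) + 1) * r ^ u
      = 1 - ((T : ℝ) + 1) * r ^ T + (T : ℝ) * r ^ (T+1) := by
    intro T
    induction T with
    | zero => simp
    | succ T ih =>
      rw [Finset.sum_range_succ, mul_add, ih]
      push_cast
      ring
  have hmono : (T:ℝ) * r ^ (T+1) ≤ ((T:ℝ) + 1) * r ^ T := by
    have h3 : r ^ (T+1) ≤ r ^ T := pow_le_pow_of_le_one hr0 hr1.le (Nat.le_succ T)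
    have h4 : (0:ℝ) ≤ r ^ T := pow_nonneg hr0 T
    nlinarith [Nat.cast_nonneg (α := ℝ) T]
  have h2 : (1 - r)^2 * ∑ u ∈ Finset.range T, ((u : ℝ) + 1) * r ^ u ≤ 1 := by
    rw [key]; linarith
  have hpos : (0:ℝ) < (1-r)^2 := by positivity
  rw [le_div_iff₀ hpos]
  linarith [h2]

-- two-step induction helper
lemma sos_two_step {P : ℕ → Prop} (h0 : P 0) (h1 : P 1)
    (hstep : ∀ u, P u → P (u+1) → P (u+2)) : ∀ u, P u := by
  have h : ∀ u, P u ∧ P (u+1) := by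
    intro u
    induction u with
    | zero => exact ⟨h0, h1⟩
    | succ v ih => exact ⟨ih.2, hstep v ih.1 ih.2⟩
  exact fun u => (h u).1

/-- Weighted Cauchy–Schwarz. -/
lemma sos_cs {n : ℕ} (s : Fin n → ℝ) (hs : ∀ i, 0 ≤ s i) (x y : Fin n → ℝ) :
    (∑ i, s i * x i * y i)^2 ≤ (∑ i, s i * x i ^ 2) * (∑ i, s i * y i ^ 2) := by
  have h := Finset.sum_mul_sq_le_sq_mul_sq Finset.univ
    (fun i => Real.sqrt (s i) * x i) (fun i => Real.sqrt (s i) * y i)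
  have e1 : ∀ i : Fin n, (Real.sqrt (s i) * x i) * (Real.sqrt (s i) * y i)
      = s i * x i * y i := by
    intro i
    have h2 : Real.sqrt (s i) * Real.sqrt (s i) = s i := Real.mul_self_sqrt (hs i)
    rw [mul_mul_mul_comm, h2, mul_assoc]
  have e2 : ∀ i : Fin n, (Real.sqrt (s i) * x i)^2 = s i * x i ^ 2 := by
    intro i; rw [mul_pow, Real.sq_sqrt (hs i)]
  have e3 : ∀ i : Fin n, (Real.sqrt (s i) * y i)^2 = s i * y i ^ 2 := by
    intro i; rw [mul_pow, Real.sq_sqrt (hs i)]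
  simp only [e1, e2, e3] at h
  exact h

set_option maxHeartbeats 2000000 in
/-- Deviation bound between discrete and continuous second-order schemes under arbitrary
bounded rounding (Theorem 3): the deviation is at most `16·d·√(2·n·smax)/(1−λ)`. -/
theorem sos_arbitrary_rounding_deviation
    (n d : ℕ) (hn : 1 ≤ n) (smax : ℝ) (s : Fin n → ℝ)
    (hs1 : ∀ i, 1 ≤ s i) (hsmax : ∀ i, s i ≤ smax)
    (lam : ℝ) (hlam0 : 0 < lam) (hlam1 : lam < 1)
    (M : Matrix (Fin n) (Fin n) ℝ)
    (hcol : ∀ j, ∑ i, M i j = 1)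
    (hMs : M.mulVec s = s)
    (hsym : ∀ i j, M i j / s i = M j i / s j)
    (hgap : ∀ w : Fin n → ℝ, ∑ i, w i * s i = 0 →
      ∑ i, s i * (Matrix.vecMul w M i) ^ 2 ≤ lam ^ 2 * ∑ i, s i * (w i) ^ 2)
    (G : SimpleGraph (Fin n)) [DecidableRel G.Adj]
    (hsupp : ∀ i j, i ≠ j → ¬ G.Adj i j → M i j = 0)
    (hdeg : G.maxDegree ≤ d)
    (β : ℝ) (hβ : β = 2 / (1 + Real.sqrt (1 - lam ^ 2)))
    (e : ℕ → Matrix (Fin n) (Fin n) ℝ)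
    (hanti : ∀ s i j, e s i j = -(e s j i))
    (hbdd : ∀ s i j, |e s i j| ≤ 1)
    (hedge : ∀ s i j, ¬ G.Adj i j → e s i j = 0)
    (k : Fin n) (t : ℕ) :
    |∑ u ∈ Finset.range (t + 1), (1 / 2 : ℝ) * ∑ i : Fin n, ∑ j : Fin n,
        if G.Adj i j then (sosQ M β u k i - sosQ M β u k j) * e (t - u) i j else 0|
      ≤ 16 * d * Real.sqrt (2 * n * smax) / (1 - lam) := by
  classical
  have hs0 : ∀ i, (0:ℝ) < s i := fun i => lt_of_lt_of_le one_pos (hs1 i)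
  haveI : NeZero n := ⟨by omega⟩
  have hsbar : (0:ℝ) < ∑ i, s i :=
    Finset.sum_pos (fun i _ => hs0 i) Finset.univ_nonempty
  set sbar : ℝ := ∑ i, s i with hsbar_def
  -- σ, β, r facts
  set σ : ℝ := Real.sqrt (1 - lam ^ 2) with hσ_def
  have hσsq : σ ^ 2 = 1 - lam ^ 2 := Real.sq_sqrt (by nlinarith)
  have hσ0 : 0 < σ := Real.sqrt_pos.2 (by nlinarith)
  have hσ1 : σ < 1 := by
    nlinarith [hσsq, hσ0]
  have h1σ : (0:ℝ) < 1 + σ := by linarith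
  have hβσ : β * (1 + σ) = 2 := by rw [hβ]; field_simp
  have hβ1 : 1 < β := by nlinarith
  have hβ2 : β < 2 := by nlinarith
  set r : ℝ := lam * β / 2 with hr_def
  have hre : r * (1 + σ) = lam := by
    rw [hr_def]; linear_combination (lam / 2) * hβσ
  have hr0 : 0 < r := by rw [hr_def]; positivity
  have hr1 : r < 1 := by nlinarith
  have hβr : β - 1 = r ^ 2 := by
    rw [hr_def]
    linear_combination ((β * σ + 2 - β)/4) * hβσ - (β^2/4) * hσsq
  have hsl : 1 - lam ≤ σ ^ 2 := by rw [hσsq]; nlinarith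
  have hA : σ / 2 ≤ 1 - r := by nlinarith [hre, hσ0, hσ1, hlam1]
  have h1r : (1 - lam) / 4 ≤ (1 - r)^2 := by nlinarith [hA, hsl, hσ0.le]
  clear_value σ r
  -- inner product machinery
  set ip : (Fin n → ℝ) → (Fin n → ℝ) → ℝ := fun x y => ∑ i, s i * x i * y i with hip_def
  set Nm : (Fin n → ℝ) → ℝ := fun x => ∑ i, s i * x i ^ 2 with hNm_def
  have hNip : ∀ x, Nm x = ip x x := by
    intro x; simp only [hNm_def, hip_def]
    exact Finset.sum_congr rfl fun i _ => by ring
  have hN0 : ∀ x, 0 ≤ Nm x := by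
    intro x; exact Finset.sum_nonneg fun i _ => mul_nonneg (hs0 i).le (sq_nonneg _)
  have hCS : ∀ x y, ip x y ≤ Real.sqrt (Nm x) * Real.sqrt (Nm y) := by
    intro x y
    have h := sos_cs s (fun i => (hs0 i).le) x y
    have h2 : ip x y ≤ |ip x y| := le_abs_self _
    have h3 : |ip x y| = Real.sqrt ((ip x y)^2) := (Real.sqrt_sq_eq_abs _).symm
    rw [h3] at h2
    refine h2.trans ?_
    rw [← Real.sqrt_mul (hN0 x)]
    exact Real.sqrt_le_sqrt h
  have hip_comm : ∀ x y, ip x y = ip y x := by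
    intro x y; exact Finset.sum_congr rfl fun i _ => by ring
  have hip_lin : ∀ (c1 c2 : ℝ) (p q z : Fin n → ℝ),
      ip (c1 • p + c2 • q) z = c1 * ip p z + c2 * ip q z := by
    intro c1 c2 p q z
    simp only [hip_def]
    rw [Finset.mul_sum, Finset.mul_sum, ← Finset.sum_add_distrib]
    exact Finset.sum_congr rfl fun i _ => by
      simp only [Pi.add_apply, Pi.smul_apply, smul_eq_mul]; ring
  -- self-adjointness
  have hMsym : ∀ i j, s j * M i j = s i * M j i := by
    intro i j
    have h := hsym i j
    have hi := (hs0 i).ne'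
    have hj := (hs0 j).ne'
    field_simp at h
    linear_combination h
  have hSA : ∀ x y, ip (Matrix.vecMul x M) y = ip x (Matrix.vecMul y M) := by
    intro x y
    simp only [hip_def, Matrix.vecMul, dotProduct]
    calc ∑ i, s i * (∑ j, x j * M j i) * y i
        = ∑ i, ∑ j, x j * (s i * M j i) * y i := by
          refine Finset.sum_congr rfl fun i _ => ?_
          rw [Finset.mul_sum, Finset.sum_mul]
          exact Finset.sum_congr rfl fun j _ => by ring
      _ = ∑ j, ∑ i, x j * (s i * M j i) * y i := Finset.sum_comm
      _ = ∑ j, ∑ i, x j * (s j * M i j) * y i := by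
          refine Finset.sum_congr rfl fun j _ => Finset.sum_congr rfl fun i _ => ?_
          rw [hMsym j i]
      _ = ∑ j, s j * x j * ∑ i, y i * M i j := by
          refine Finset.sum_congr rfl fun j _ => ?_
          rw [Finset.mul_sum]
          exact Finset.sum_congr rfl fun i _ => by ring
  -- mean-zero subspace
  have hZM : ∀ x : Fin n → ℝ, (∑ i, x i * s i = 0) →
      ∑ i, (Matrix.vecMul x M) i * s i = 0 := by
    intro x hx
    simp only [Matrix.vecMul, dotProduct]
    calc ∑ i, (∑ j, x j * M j i) * s i
        = ∑ i, ∑ j, x j * M j i * s i := by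
          exact Finset.sum_congr rfl fun i _ => by rw [Finset.sum_mul]
      _ = ∑ j, ∑ i, x j * M j i * s i := Finset.sum_comm
      _ = ∑ j, x j * s j := by
          refine Finset.sum_congr rfl fun j _ => ?_
          have hj : M.mulVec s j = s j := congrFun hMs j
          simp only [Matrix.mulVec, dotProduct] at hj
          rw [Finset.sum_congr rfl (fun i (_ : i ∈ Finset.univ) =>
            (show x j * M j i * s i = x j * (M j i * s i) by ring)), ← Finset.mul_sum, hj]
      _ = 0 := hx
  have hip_smul : ∀ (c : ℝ) (p z : Fin n → ℝ), ip (c • p) z = c * ip p z := by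
    intro c p z
    simp only [hip_def]
    rw [Finset.mul_sum]
    exact Finset.sum_congr rfl fun i _ => by
      simp only [Pi.smul_apply, smul_eq_mul]; ring
  -- Q lemmas
  set Q : ℕ → Matrix (Fin n) (Fin n) ℝ := sosQ M β with hQ_def
  have hQ0 : Q 0 = 1 := rfl
  have hQ1 : Q 1 = β • M := rfl
  have hQs : ∀ u, Q (u+2) = β • (M * Q (u+1)) + (1-β) • Q u := fun u => rfl
  have hcomm : ∀ u, M * Q u = Q u * M := by
    refine sos_two_step ?_ ?_ ?_
    · rw [hQ0, Matrix.mul_one, Matrix.one_mul]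
    · rw [hQ1, Matrix.mul_smul, Matrix.smul_mul]
    · intro u ih0 ih1
      rw [hQs u, Matrix.mul_add, Matrix.add_mul, Matrix.mul_smul, Matrix.smul_mul,
        Matrix.mul_smul, Matrix.smul_mul, ih0, ih1, ← Matrix.mul_assoc, ih1]
  have hcs : ∀ u, ∃ cc : ℝ, ∀ j, ∑ i, Q u i j = cc := by
    refine sos_two_step ?_ ?_ ?_
    · exact ⟨1, fun j => by simp [hQ0, Matrix.one_apply]⟩
    · refine ⟨β, fun j => ?_⟩
      simp only [hQ1, Matrix.smul_apply, smul_eq_mul]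
      rw [← Finset.mul_sum, hcol j, mul_one]
    · rintro u ⟨c0, h0⟩ ⟨c1, h1⟩
      refine ⟨β * c1 + (1-β) * c0, fun j => ?_⟩
      rw [hQs u]
      simp only [Matrix.add_apply, Matrix.smul_apply, smul_eq_mul]
      rw [Finset.sum_add_distrib, ← Finset.mul_sum, ← Finset.mul_sum]
      congr 1
      · have : ∑ i, (M * Q (u+1)) i j = c1 := by
          calc ∑ i, (M * Q (u+1)) i j = ∑ i, ∑ m, M i m * Q (u+1) m j := by
                exact Finset.sum_congr rfl fun i _ => by rw [Matrix.mul_apply]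
            _ = ∑ m, ∑ i, M i m * Q (u+1) m j := Finset.sum_comm
            _ = ∑ m, Q (u+1) m j := by
                refine Finset.sum_congr rfl fun m _ => ?_
                rw [← Finset.sum_mul, hcol m, one_mul]
            _ = c1 := h1 j
        rw [this]
      · rw [h0 j]
  -- the vector v
  set w0 : Fin n → ℝ := fun i => (if i = k then 1 else 0) - s k / sbar with hw0_def
  set v : ℕ → Fin n → ℝ := fun u => Matrix.vecMul w0 (Q u) with hv_def
  have hvecsmul : ∀ (c : ℝ) (A : Matrix (Fin n) (Fin n) ℝ) (x : Fin n → ℝ),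
      Matrix.vecMul x (c • A) = c • Matrix.vecMul x A := by
    intro c A x
    funext i
    simp only [Matrix.vecMul, dotProduct, Matrix.smul_apply, smul_eq_mul,
      Pi.smul_apply]
    rw [Finset.mul_sum]
    exact Finset.sum_congr rfl fun m _ => by ring
  have hv0 : v 0 = w0 := by
    simp only [hv_def, hQ0, Matrix.vecMul_one]
  have hv1 : v 1 = β • Matrix.vecMul w0 M := by
    simp only [hv_def, hQ1, hvecsmul]
  have hvstep : ∀ u, v (u+2) = β • Matrix.vecMul (v (u+1)) M + (1-β) • v u := by
    intro u
    calc v (u+2) = Matrix.vecMul w0 (β • (M * Q (u+1)) + (1-β) • Q u) := by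
          simp only [hv_def, hQs u]
      _ = Matrix.vecMul w0 (β • (Q (u+1) * M) + (1-β) • Q u) := by rw [hcomm (u+1)]
      _ = β • Matrix.vecMul (Matrix.vecMul w0 (Q (u+1))) M + (1-β) • Matrix.vecMul w0 (Q u) := by
          rw [Matrix.vecMul_add, hvecsmul, hvecsmul, Matrix.vecMul_vecMul]
      _ = β • Matrix.vecMul (v (u+1)) M + (1-β) • v u := rfl
  -- mean zero facts
  have hZw0 : ∑ i, w0 i * s i = 0 := by
    have e1 : ∑ i, w0 i * s i
        = (∑ i, (if i = k then (1:ℝ) else 0) * s i) - ∑ i, (s k / sbar) * s i := by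
      rw [← Finset.sum_sub_distrib]
      refine Finset.sum_congr rfl fun i _ => ?_
      simp only [hw0_def]; ring
    have e2 : ∑ i, (if i = k then (1:ℝ) else 0) * s i = s k := by
      simp [ite_mul]
    have e3 : ∑ i, s k / sbar * s i = s k := by
      rw [← Finset.mul_sum, ← hsbar_def]
      field_simp
    rw [e1, e2, e3, sub_self]
  have hZlin : ∀ (c1 c2 : ℝ) (p q : Fin n → ℝ), (∑ i, p i * s i = 0) → (∑ i, q i * s i = 0) →
      ∑ i, (c1 • p + c2 • q) i * s i = 0 := by
    intro c1 c2 p q hp hq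
    have : ∑ i, (c1 • p + c2 • q) i * s i
        = c1 * ∑ i, p i * s i + c2 * ∑ i, q i * s i := by
      rw [Finset.mul_sum, Finset.mul_sum, ← Finset.sum_add_distrib]
      exact Finset.sum_congr rfl fun i _ => by
        simp only [Pi.add_apply, Pi.smul_apply, smul_eq_mul]; ring
    rw [this, hp, hq]; ring
  have hZv : ∀ u, ∑ i, v u i * s i = 0 := by
    refine sos_two_step ?_ ?_ ?_
    · rw [hv0]; exact hZw0
    · rw [hv1]
      have h := hZM w0 hZw0
      have : (β • Matrix.vecMul w0 M) = β • Matrix.vecMul w0 M + (0:ℝ) • w0 := by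
        simp
      rw [this]
      exact hZlin β 0 _ _ h hZw0
    · intro u ih0 ih1
      rw [hvstep u]
      exact hZlin β (1-β) _ _ (hZM _ ih1) ih0
  -- energy
  set E : ℕ → ℝ := fun u =>
    Nm (v (u+1)) + r^2 * Nm (v u) - β * ip (v (u+1)) (Matrix.vecMul (v u) M) with hE_def
  have hip_two : ∀ (c1 c2 : ℝ) (p q z : Fin n → ℝ),
      ip z (c1 • p + c2 • q) = c1 * ip z p + c2 * ip z q := by
    intro c1 c2 p q z
    rw [hip_comm, hip_lin, hip_comm p z, hip_comm q z]
  have hE0 : E 0 = r^2 * Nm w0 := by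
    simp only [hE_def]
    rw [hv0, hv1]
    set a := Matrix.vecMul w0 M with ha_def
    have h1 : ip (β • a) a = β * ip a a := hip_smul β a a
    have h2 : Nm (β • a) = β^2 * ip a a := by
      rw [hNip, hip_smul, hip_comm, hip_smul]; ring
    rw [h1, h2]; ring
  have hEstep : ∀ u, E (u+1) = r^2 * E u := by
    intro u
    have h1β : (1 - β : ℝ) = -(r^2) := by linarith
    set x := v (u+1) with hx_def
    set y := v u with hy_def
    set a := Matrix.vecMul x M with ha_def
    set b := Matrix.vecMul y M with hb_def
    have hv2 : v (u+2) = β • a + (-(r^2)) • y := by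
      rw [hvstep u, h1β]
    have hBD : ip a y = ip x b := hSA x y
    have expand : ∀ p, ip (β • a + (-(r^2)) • y) p = β * ip a p + (-(r^2)) * ip y p :=
      fun p => hip_lin β (-(r^2)) a y p
    have hNm2 : Nm (β • a + (-(r^2)) • y)
        = β^2 * ip a a + 2*β*(-(r^2)) * ip a y + (r^2)^2 * ip y y := by
      rw [hNip, expand, hip_comm a (β • a + (-(r^2)) • y), expand,
        hip_comm y (β • a + (-(r^2)) • y), expand, hip_comm y a]
      ring
    have hE1 : E (u+1) = Nm (v (u+2)) + r^2 * Nm x - β * ip (v (u+2)) a := rfl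
    rw [hE1, hv2, hNm2, expand a]
    have hE2 : E u = Nm x + r^2 * Nm y - β * ip x b := rfl
    rw [hE2, hNip x, hNip y, hip_comm y a, hBD]
    ring
  have hEu : ∀ u, E u = (r^2)^(u+1) * Nm w0 := by
    intro u
    induction u with
    | zero => rw [hE0]; ring
    | succ p ih => rw [hEstep p, ih]; ring
  -- norm decay
  have hg_step : ∀ u, Real.sqrt (Nm (v (u+1)))
      ≤ r * Real.sqrt (Nm (v u)) + r^(u+1) * Real.sqrt (Nm w0) := by
    intro u
    set g1 := Real.sqrt (Nm (v (u+1))) with hg1_def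
    set g0 := Real.sqrt (Nm (v u)) with hg0_def
    have hb : Nm (Matrix.vecMul (v u) M) ≤ lam^2 * Nm (v u) := hgap (v u) (hZv u)
    have hbs : Real.sqrt (Nm (Matrix.vecMul (v u) M)) ≤ lam * g0 := by
      have h1 := Real.sqrt_le_sqrt hb
      have h2 : lam^2 * Nm (v u) = (lam * g0)^2 := by
        rw [mul_pow, hg0_def, Real.sq_sqrt (hN0 _)]
      rw [h2, Real.sqrt_sq (by positivity)] at h1
      exact h1
    have hip_bound : β * ip (v (u+1)) (Matrix.vecMul (v u) M) ≤ 2*r*(g1*g0) := by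
      have h1 := hCS (v (u+1)) (Matrix.vecMul (v u) M)
      have h2 : ip (v (u+1)) (Matrix.vecMul (v u) M) ≤ g1 * (lam * g0) :=
        h1.trans (mul_le_mul_of_nonneg_left hbs (Real.sqrt_nonneg _))
      calc β * ip (v (u+1)) (Matrix.vecMul (v u) M) ≤ β * (g1 * (lam * g0)) :=
            mul_le_mul_of_nonneg_left h2 (by linarith)
        _ = 2*r*(g1*g0) := by rw [hr_def]; ring
    have hlow : (g1 - r*g0)^2 ≤ E u := by
      have e1 : Nm (v (u+1)) = g1^2 := by rw [hg1_def, Real.sq_sqrt (hN0 _)]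
      have e2 : Nm (v u) = g0^2 := by rw [hg0_def, Real.sq_sqrt (hN0 _)]
      have e3 : E u = Nm (v (u+1)) + r^2 * Nm (v u)
          - β * ip (v (u+1)) (Matrix.vecMul (v u) M) := rfl
      rw [e3, e1, e2]
      nlinarith [hip_bound]
    have hupper : E u = (r^(u+1) * Real.sqrt (Nm w0))^2 := by
      rw [hEu u, mul_pow, Real.sq_sqrt (hN0 _)]
      ring
    have h2 : (g1 - r*g0)^2 ≤ (r^(u+1) * Real.sqrt (Nm w0))^2 := hupper ▸ hlow
    have h4 : g1 - r*g0 ≤ |g1 - r*g0| := le_abs_self _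
    have h5 : |g1 - r*g0| = Real.sqrt ((g1-r*g0)^2) := (Real.sqrt_sq_eq_abs _).symm
    have h6 : Real.sqrt ((g1-r*g0)^2) ≤ r^(u+1) * Real.sqrt (Nm w0) := by
      have := Real.sqrt_le_sqrt h2
      rwa [Real.sqrt_sq (mul_nonneg (pow_nonneg hr0.le _) (Real.sqrt_nonneg _))] at this
    linarith [h4, h5 ▸ h6]
  have hgb : ∀ u, Real.sqrt (Nm (v u)) ≤ ((u:ℝ)+1) * r^u * Real.sqrt (Nm w0) := by
    intro u
    induction u with
    | zero => rw [hv0]; simp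
    | succ p ih =>
      have h1 := hg_step p
      have h2 : r * Real.sqrt (Nm (v p)) ≤ r * (((p:ℝ)+1) * r^p * Real.sqrt (Nm w0)) :=
        mul_le_mul_of_nonneg_left ih hr0.le
      have h3 : r * (((p:ℝ)+1) * r^p * Real.sqrt (Nm w0)) + r^(p+1) * Real.sqrt (Nm w0)
          = (((p:ℝ)+1)+1) * r^(p+1) * Real.sqrt (Nm w0) := by ring
      push_cast
      linarith [h1, h2, h3.le]
  -- bound on Nm w0
  have hsmax0 : (1:ℝ) ≤ smax := le_trans (hs1 ⟨0, by omega⟩) (hsmax ⟨0, by omega⟩)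
  have hNw0 : Nm w0 ≤ smax := by
    have hsk : ∑ i, s i * (if i = k then (1:ℝ) else 0) = s k := by
      simp [mul_ite]
    have e : Nm w0 = s k - 2*(s k/sbar)*(s k) + (s k/sbar)^2 * sbar := by
      simp only [hNm_def, hw0_def]
      have hpt : ∀ i : Fin n, s i * ((if i = k then (1:ℝ) else 0) - s k/sbar)^2
          = (s i * (if i = k then (1:ℝ) else 0)
              - 2*(s k/sbar)*(s i * (if i = k then (1:ℝ) else 0))) + (s k/sbar)^2 * s i := by
        intro i; by_cases h : i = k <;> simp [h] <;> ring
      rw [Finset.sum_congr rfl fun i _ => hpt i, Finset.sum_add_distrib,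
        Finset.sum_sub_distrib, ← Finset.mul_sum, ← Finset.mul_sum, hsk, ← hsbar_def]
    rw [e]
    have hsb2 : (s k/sbar)^2 * sbar = (s k)^2/sbar := by
      field_simp
    rw [hsb2]
    have hk2 : 0 ≤ (s k)^2 / sbar := by positivity
    have hk3 : (s k)^2 / sbar ≤ 2*(s k/sbar)*(s k) := by
      have : 2*(s k/sbar)*(s k) = 2 * ((s k)^2/sbar) := by ring
      rw [this]
      linarith [hk2]
    linarith [hsmax k, hk2, hk3]
  -- per-round bound
  have main : ∀ u, |(1/2 : ℝ) * ∑ i : Fin n, ∑ j : Fin n,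
      (if G.Adj i j then (Q u k i - Q u k j) * e (t-u) i j else 0)|
      ≤ (d:ℝ) * Real.sqrt n * Real.sqrt (Nm (v u)) := by
    intro u
    obtain ⟨cc, hcc⟩ := hcs u
    have hQv : ∀ i, v u i = Q u k i - (s k / sbar) * cc := by
      intro i
      simp only [hv_def, hw0_def, Matrix.vecMul, dotProduct]
      rw [Finset.sum_congr rfl (fun m (_ : m ∈ Finset.univ) => sub_mul
        (if m = k then (1:ℝ) else 0) (s k / sbar) (Q u m i)), Finset.sum_sub_distrib]
      congr 1
      · simp [ite_mul]
      · rw [← Finset.mul_sum, hcc i]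
    have habs : ∀ i j, |if G.Adj i j then (Q u k i - Q u k j) * e (t-u) i j else 0|
        ≤ (if G.Adj i j then |v u i| + |v u j| else 0) := by
      intro i j
      by_cases h : G.Adj i j
      · simp only [h, if_true]
        calc |(Q u k i - Q u k j) * e (t-u) i j|
            = |Q u k i - Q u k j| * |e (t-u) i j| := abs_mul _ _
          _ ≤ |Q u k i - Q u k j| * 1 :=
              mul_le_mul_of_nonneg_left (hbdd _ _ _) (abs_nonneg _)
          _ = |v u i - v u j| := by
              rw [mul_one]; congr 1; rw [hQv i, hQv j]; ring
          _ ≤ |v u i| + |v u j| := by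
              simpa [sub_eq_add_neg] using abs_add_le (v u i) (-(v u j))
      · simp [h]
    have h1 : |∑ i : Fin n, ∑ j : Fin n,
        (if G.Adj i j then (Q u k i - Q u k j) * e (t-u) i j else 0)|
        ≤ ∑ i : Fin n, ∑ j : Fin n, (if G.Adj i j then |v u i| + |v u j| else 0) := by
      refine (Finset.abs_sum_le_sum_abs _ _).trans ?_
      refine Finset.sum_le_sum fun i _ => ?_
      exact (Finset.abs_sum_le_sum_abs _ _).trans (Finset.sum_le_sum fun j _ => habs i j)
    have h2 : ∑ i : Fin n, ∑ j : Fin n, (if G.Adj i j then |v u i| + |v u j| else 0)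
        = 2 * ∑ i : Fin n, ∑ j : Fin n, (if G.Adj i j then |v u i| else 0) := by
      have e1 : ∀ i j : Fin n, (if G.Adj i j then |v u i| + |v u j| else 0)
          = (if G.Adj i j then |v u i| else 0) + (if G.Adj i j then |v u j| else 0) :=
        fun i j => by by_cases h : G.Adj i j <;> simp [h]
      have e2 : ∑ i : Fin n, ∑ j : Fin n, (if G.Adj i j then |v u j| else 0)
          = ∑ i : Fin n, ∑ j : Fin n, (if G.Adj i j then |v u i| else 0) := by
        rw [Finset.sum_comm]
        refine Finset.sum_congr rfl fun i _ => Finset.sum_congr rfl fun j _ => ?_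
        exact if_congr (G.adj_comm j i) rfl rfl
      calc ∑ i : Fin n, ∑ j : Fin n, (if G.Adj i j then |v u i| + |v u j| else 0)
          = ∑ i : Fin n, ∑ j : Fin n, ((if G.Adj i j then |v u i| else 0)
              + (if G.Adj i j then |v u j| else 0)) := by
            exact Finset.sum_congr rfl fun i _ => Finset.sum_congr rfl fun j _ => e1 i j
        _ = (∑ i : Fin n, ∑ j : Fin n, (if G.Adj i j then |v u i| else 0))
            + ∑ i : Fin n, ∑ j : Fin n, (if G.Adj i j then |v u j| else 0) := by
            rw [← Finset.sum_add_distrib]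
            exact Finset.sum_congr rfl fun i _ => Finset.sum_add_distrib
        _ = 2 * ∑ i : Fin n, ∑ j : Fin n, (if G.Adj i j then |v u i| else 0) := by
            rw [e2]; ring
    have h3 : ∑ i : Fin n, ∑ j : Fin n, (if G.Adj i j then |v u i| else 0)
        ≤ (d:ℝ) * ∑ i : Fin n, |v u i| := by
      rw [Finset.mul_sum]
      refine Finset.sum_le_sum fun i _ => ?_
      have e3 : ∑ j : Fin n, (if G.Adj i j then |v u i| else 0)
          = (G.degree i : ℝ) * |v u i| := by
        rw [Finset.sum_ite, Finset.sum_const, Finset.sum_const_zero, add_zero,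
          nsmul_eq_mul]
        congr 2
        rw [SimpleGraph.degree, SimpleGraph.neighborFinset_eq_filter]
      rw [e3]
      refine mul_le_mul_of_nonneg_right ?_ (abs_nonneg _)
      exact_mod_cast le_trans (G.degree_le_maxDegree i) hdeg
    have h4 : ∑ i : Fin n, |v u i| ≤ Real.sqrt n * Real.sqrt (Nm (v u)) := by
      have hc := Finset.sum_mul_sq_le_sq_mul_sq Finset.univ
        (fun _ : Fin n => (1:ℝ)) (fun i => |v u i|)
      simp only [one_mul, one_pow] at hc
      have hcard : ∑ _i : Fin n, (1:ℝ) = (n:ℝ) := by simp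
      have hvsq : ∑ i, |v u i|^2 ≤ Nm (v u) := by
        refine Finset.sum_le_sum fun i _ => ?_
        rw [sq_abs]
        exact le_mul_of_one_le_left (sq_nonneg _) (hs1 i)
      have h5 : (∑ i, |v u i|)^2 ≤ (n:ℝ) * Nm (v u) := by
        calc (∑ i, |v u i|)^2 ≤ (∑ _i : Fin n, (1:ℝ)) * ∑ i, |v u i|^2 := hc
          _ ≤ (n:ℝ) * Nm (v u) := by
              rw [hcard]
              exact mul_le_mul_of_nonneg_left hvsq (Nat.cast_nonneg n)
      have h6 : ∑ i, |v u i| = Real.sqrt ((∑ i, |v u i|)^2) :=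
        (Real.sqrt_sq (Finset.sum_nonneg fun i _ => abs_nonneg _)).symm
      rw [h6, ← Real.sqrt_mul (Nat.cast_nonneg n)]
      exact Real.sqrt_le_sqrt h5
    rw [abs_mul]
    have h7 : |(1/2 : ℝ)| = 1/2 := by norm_num
    rw [h7]
    have hd0 : (0:ℝ) ≤ (d:ℝ) := Nat.cast_nonneg d
    calc (1/2 : ℝ) * |∑ i : Fin n, ∑ j : Fin n,
          (if G.Adj i j then (Q u k i - Q u k j) * e (t-u) i j else 0)|
        ≤ (1/2 : ℝ) * (2 * ((d:ℝ) * ∑ i : Fin n, |v u i|)) := by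
          have := h1.trans (le_of_eq h2)
          have h8 : (2:ℝ) * ∑ i : Fin n, ∑ j : Fin n, (if G.Adj i j then |v u i| else 0)
              ≤ 2 * ((d:ℝ) * ∑ i : Fin n, |v u i|) := by linarith [h3]
          linarith [this, h8]
      _ = (d:ℝ) * ∑ i : Fin n, |v u i| := by ring
      _ ≤ (d:ℝ) * (Real.sqrt n * Real.sqrt (Nm (v u))) :=
          mul_le_mul_of_nonneg_left h4 hd0
      _ = (d:ℝ) * Real.sqrt n * Real.sqrt (Nm (v u)) := by ring
  -- final summation
  have gw0 : Real.sqrt (Nm w0) ≤ Real.sqrt smax := Real.sqrt_le_sqrt hNw0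
  have hfrac : 1/(1-r)^2 ≤ 4/(1-lam) := by
    rw [div_le_div_iff₀ (pow_pos (by linarith : (0:ℝ) < 1-r) 2) (by linarith)]
    linarith [h1r]
  calc |∑ u ∈ Finset.range (t + 1), (1 / 2 : ℝ) * ∑ i : Fin n, ∑ j : Fin n,
        (if G.Adj i j then (Q u k i - Q u k j) * e (t - u) i j else 0)|
      ≤ ∑ u ∈ Finset.range (t + 1), |(1 / 2 : ℝ) * ∑ i : Fin n, ∑ j : Fin n,
        (if G.Adj i j then (Q u k i - Q u k j) * e (t - u) i j else 0)| :=
        Finset.abs_sum_le_sum_abs _ _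
    _ ≤ ∑ u ∈ Finset.range (t + 1), (d:ℝ) * Real.sqrt n * Real.sqrt (Nm (v u)) :=
        Finset.sum_le_sum fun u _ => main u
    _ ≤ ∑ u ∈ Finset.range (t + 1),
          (d:ℝ) * Real.sqrt n * (((u:ℝ)+1) * r^u * Real.sqrt (Nm w0)) :=
        Finset.sum_le_sum fun u _ => mul_le_mul_of_nonneg_left (hgb u)
          (mul_nonneg (Nat.cast_nonneg d) (Real.sqrt_nonneg _))
    _ = (d:ℝ) * Real.sqrt n * Real.sqrt (Nm w0)
          * ∑ u ∈ Finset.range (t + 1), ((u:ℝ)+1) * r^u := by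
        rw [Finset.mul_sum]
        exact Finset.sum_congr rfl fun u _ => by ring
    _ ≤ (d:ℝ) * Real.sqrt n * Real.sqrt (Nm w0) * (1/(1-r)^2) :=
        mul_le_mul_of_nonneg_left (sos_sum_geo r hr0.le hr1 _)
          (by positivity)
    _ ≤ 16 * d * Real.sqrt (2 * n * smax) / (1 - lam) := by
        have e1 : Real.sqrt (2 * n * smax)
            = Real.sqrt 2 * Real.sqrt n * Real.sqrt smax := by
          rw [Real.sqrt_mul (by positivity), Real.sqrt_mul (by norm_num)]
        have h2 : (d:ℝ) * Real.sqrt n * Real.sqrt (Nm w0) * (1/(1-r)^2)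
            ≤ (d:ℝ) * Real.sqrt n * Real.sqrt smax * (4/(1-lam)) := by
          have hnn : (0:ℝ) ≤ (d:ℝ) * Real.sqrt n := by positivity
          have s1 : (d:ℝ) * Real.sqrt n * Real.sqrt (Nm w0)
              ≤ (d:ℝ) * Real.sqrt n * Real.sqrt smax :=
            mul_le_mul_of_nonneg_left gw0 hnn
          have s2 : (0:ℝ) ≤ 1/(1-r)^2 := by positivity
          have s3 : (0:ℝ) ≤ (d:ℝ) * Real.sqrt n * Real.sqrt smax := by positivity
          calc (d:ℝ) * Real.sqrt n * Real.sqrt (Nm w0) * (1/(1-r)^2)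
              ≤ (d:ℝ) * Real.sqrt n * Real.sqrt smax * (1/(1-r)^2) :=
                mul_le_mul_of_nonneg_right s1 s2
            _ ≤ (d:ℝ) * Real.sqrt n * Real.sqrt smax * (4/(1-lam)) :=
                mul_le_mul_of_nonneg_left hfrac s3
        refine h2.trans ?_
        rw [e1]
        have hs2 : (1:ℝ) ≤ Real.sqrt 2 := by
          rw [show (1:ℝ) = Real.sqrt 1 by simp]
          exact Real.sqrt_le_sqrt (by norm_num)
        have hnn2 : (0:ℝ) ≤ (d:ℝ) * Real.sqrt n * Real.sqrt smax := by positivity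
        have hlm : (0:ℝ) < 1 - lam := by linarith
        rw [div_eq_mul_one_div (16 * (d:ℝ) * (Real.sqrt 2 * Real.sqrt n * Real.sqrt smax)) (1-lam),
          div_eq_mul_one_div (4:ℝ) (1-lam)]
        have : (d:ℝ) * Real.sqrt n * Real.sqrt smax * (4 * (1/(1-lam)))
            ≤ 16 * (d:ℝ) * (Real.sqrt 2 * Real.sqrt n * Real.sqrt smax) * (1/(1-lam)) := by
          have hx : (0:ℝ) ≤ 1/(1-lam) := by positivity
          have hy : (d:ℝ) * Real.sqrt n * Real.sqrt smax * 4
              ≤ 16 * (d:ℝ) * (Real.sqrt 2 * Real.sqrt n * Real.sqrt smax) := by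
            nlinarith [hnn2, hs2]
          calc (d:ℝ) * Real.sqrt n * Real.sqrt smax * (4 * (1/(1-lam)))
              = ((d:ℝ) * Real.sqrt n * Real.sqrt smax * 4) * (1/(1-lam)) := by ring
            _ ≤ 16 * (d:ℝ) * (Real.sqrt 2 * Real.sqrt n * Real.sqrt smax) * (1/(1-lam)) :=
                mul_le_mul_of_nonneg_right hy hx
        linarith [this]
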